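/- arXiv:0812.0329 — 3 statements merged into one kernel-verified Lean document; each statement's English description precedes it below -/
import Mathlib

section
/- Let Φ and Ψ be two N×N unitary matrices partitioned into M = N/d column-blocks of size N×d. Then the block-coherence μ_B(Φ,Ψ) = max_{ℓ,r} (1/d)ρ(Φ[ℓ]^H Ψ[r]) satisfies μ_B(Φ,Ψ) ≥ 1/√(dN). -/
open Matrix

noncomputable def rho {m n : Type*} [Fintype m] [Fintype n] [DecidableEq n]
    (A : Matrix m n ℂ) : ℝ :=
  ‖LinearMap.toContinuousLinearMap (Matrix.toEuclideanLin A)‖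

noncomputable def enorm {n : Type*} [Fintype n] (v : n → ℂ) : ℝ :=
  Real.sqrt (∑ i, ‖v i‖ ^ 2)

def blk {α β γ : Type*} (D : Matrix α (β × γ) ℂ) (ℓ : β) : Matrix α γ ℂ :=
  Matrix.of fun i j => D i (ℓ, j)

def blk2 {ι κ d₁ d₂ : Type*} (A : Matrix (ι × d₁) (κ × d₂) ℂ) (ℓ : ι) (r : κ) :
    Matrix d₁ d₂ ℂ :=
  Matrix.of fun i j => A (ℓ, i) (r, j)

noncomputable def rhoc {ι κ d : Type*} [Fintype ι] [Fintype κ] [Fintype d] [DecidableEq d]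
    (A : Matrix (ι × d) (κ × d) ℂ) : ℝ :=
  ⨆ r : κ, ∑ ℓ : ι, rho (blk2 A ℓ r)

noncomputable def vnorm1 {ι d : Type*} [Fintype ι] [Fintype d] (v : ι × d → ℂ) : ℝ :=
  ∑ ℓ : ι, enorm (fun j => v (ℓ, j))

noncomputable def vnormInf {ι d : Type*} [Fintype ι] [Fintype d] (v : ι × d → ℂ) : ℝ :=
  ⨆ ℓ : ι, enorm (fun j => v (ℓ, j))

noncomputable def pinv {α n : Type*} [Fintype α] [Fintype n] [DecidableEq n]
    (B : Matrix α n ℂ) : Matrix n α ℂ :=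
  (Bᴴ * B)⁻¹ * Bᴴ

noncomputable def muB2 {M d : ℕ} (Φ Ψ : Matrix (Fin M × Fin d) (Fin M × Fin d) ℂ) : ℝ :=
  ⨆ p : Fin M × Fin M, (1 / (d : ℝ)) * rho ((blk Φ p.1)ᴴ * blk Ψ p.2)

lemma col_norm_le {m n : Type*} [Fintype m] [Fintype n] [DecidableEq n]
    (A : Matrix m n ℂ) (j : n) : ∑ i, ‖A i j‖ ^ 2 ≤ rho A ^ 2 := by
  set f := LinearMap.toContinuousLinearMap (Matrix.toEuclideanLin A)
  have h1 : ‖f (EuclideanSpace.single j (1:ℂ))‖ ≤ rho A := by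
    calc ‖f (EuclideanSpace.single j 1)‖ ≤ ‖f‖ * ‖EuclideanSpace.single j (1:ℂ)‖ :=
          f.le_opNorm _
      _ = rho A := by rw [EuclideanSpace.norm_single]; simp [rho]; rfl
  have h2 : ‖f (EuclideanSpace.single j (1:ℂ))‖ ^ 2 = ∑ i, ‖A i j‖ ^ 2 := by
    rw [EuclideanSpace.norm_eq, Real.sq_sqrt (by positivity)]
    congr 1
    ext i
    have : f (EuclideanSpace.single j (1:ℂ)) i = A i j := by
      show Matrix.toEuclideanLin A (EuclideanSpace.single j (1:ℂ)) i = A i j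
      rw [Matrix.toEuclideanLin_apply]
      simp [Matrix.mulVec_single]
    rw [this]
  calc ∑ i, ‖A i j‖ ^ 2 = ‖f (EuclideanSpace.single j (1:ℂ))‖ ^ 2 := h2.symm
    _ ≤ rho A ^ 2 := by
        have := norm_nonneg (f (EuclideanSpace.single j (1:ℂ)))
        nlinarith

lemma frob_le {m n : Type*} [Fintype m] [Fintype n] [DecidableEq n]
    (A : Matrix m n ℂ) : ∑ j, ∑ i, ‖A i j‖ ^ 2 ≤ (Fintype.card n) * rho A ^ 2 := by
  calc ∑ j, ∑ i, ‖A i j‖ ^ 2 ≤ ∑ _j : n, rho A ^ 2 :=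
        Finset.sum_le_sum fun j _ => col_norm_le A j
    _ = (Fintype.card n) * rho A ^ 2 := by
        rw [Finset.sum_const, Finset.card_univ, nsmul_eq_mul]

lemma unitary_frob {n : Type*} [Fintype n] [DecidableEq n] (G : Matrix n n ℂ)
    (hG : Gᴴ * G = 1) : ∑ q, ∑ p, ‖G p q‖ ^ 2 = Fintype.card n := by
  have key : ∀ q : n, ∑ p, ‖G p q‖ ^ 2 = 1 := by
    intro q
    have h := congrFun (congrFun hG q) q
    simp only [Matrix.mul_apply, Matrix.conjTranspose_apply, Matrix.one_apply_eq] at h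
    have := congrArg Complex.re h
    rw [Complex.re_sum] at this
    calc ∑ p, ‖G p q‖ ^ 2 = ∑ p, ((G p q).re * (G p q).re + (G p q).im * (G p q).im) := by
          refine Finset.sum_congr rfl fun p _ => ?_
          rw [← Complex.normSq_apply, ← Complex.sq_norm]
      _ = 1 := by
          simpa [Complex.mul_re, mul_comm] using this
  rw [Finset.sum_congr rfl fun q _ => key q]
  simp

theorem block_coherence_lower_bound (M d : ℕ) (hM : 0 < M) (hd : 0 < d)
    (Φ Ψ : Matrix (Fin M × Fin d) (Fin M × Fin d) ℂ)
    (hΦ : Φ ∈ Matrix.unitaryGroup (Fin M × Fin d) ℂ)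
    (hΨ : Ψ ∈ Matrix.unitaryGroup (Fin M × Fin d) ℂ) :
    muB2 Φ Ψ ≥ 1 / Real.sqrt ((d : ℝ) * (M * d)) := by
  have hd' : (0:ℝ) < d := by exact_mod_cast hd
  have hM' : (0:ℝ) < M := by exact_mod_cast hM
  set G : Matrix (Fin M × Fin d) (Fin M × Fin d) ℂ := Φᴴ * Ψ with hGdef
  have hΦ2 : Φ * Φᴴ = 1 := hΦ.2
  have hΨ1 : Ψᴴ * Ψ = 1 := hΨ.1
  have hG : Gᴴ * G = 1 := by
    rw [hGdef, conjTranspose_mul, conjTranspose_conjTranspose]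
    have h : Ψᴴ * Φ * (Φᴴ * Ψ) = Ψᴴ * (Φ * Φᴴ) * Ψ := by noncomm_ring
    rw [h, hΦ2, Matrix.mul_one, hΨ1]
  have hblk : ∀ ℓ r, blk2 G ℓ r = (blk Φ ℓ)ᴴ * blk Ψ r := by
    intro ℓ r; ext i j
    simp [blk2, blk, hGdef, Matrix.mul_apply, Matrix.conjTranspose_apply]
  set μ := muB2 Φ Ψ with hμdef
  have hrange : BddAbove (Set.range fun p : Fin M × Fin M =>
      (1/(d:ℝ)) * rho ((blk Φ p.1)ᴴ * blk Ψ p.2)) :=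
    Set.Finite.bddAbove (Set.finite_range _)
  have hterm : ∀ p : Fin M × Fin M,
      (1/(d:ℝ)) * rho ((blk Φ p.1)ᴴ * blk Ψ p.2) ≤ μ := fun p => le_ciSup hrange p
  have hμ0 : 0 ≤ μ :=
    le_trans (mul_nonneg (by positivity) (norm_nonneg _)) (hterm (⟨0, hM⟩, ⟨0, hM⟩))
  have hle : ∀ ℓ r : Fin M, rho (blk2 G ℓ r) ≤ d * μ := by
    intro ℓ r
    rw [hblk]
    have h := hterm (ℓ, r)
    calc rho ((blk Φ ℓ)ᴴ * blk Ψ r)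
        = d * ((1/(d:ℝ)) * rho ((blk Φ ℓ)ᴴ * blk Ψ r)) := by field_simp
      _ ≤ d * μ := mul_le_mul_of_nonneg_left h hd'.le
  have hdecomp : ∑ q, ∑ p, ‖G p q‖^2
      = ∑ r : Fin M, ∑ ℓ : Fin M, ∑ j : Fin d, ∑ i : Fin d, ‖blk2 G ℓ r i j‖^2 := by
    simp only [Fintype.sum_prod_type]
    exact Finset.sum_congr rfl fun r _ => Finset.sum_comm
  have htot : ((M:ℝ) * d) = ∑ q, ∑ p, ‖G p q‖^2 := by
    rw [unitary_frob G hG]; simp [Fintype.card_prod]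
  have key : ((M:ℝ) * d) ≤ (M:ℝ)^2 * ((d:ℝ)^3 * μ^2) := by
    rw [htot, hdecomp]
    calc ∑ r : Fin M, ∑ ℓ : Fin M, ∑ j : Fin d, ∑ i : Fin d, ‖blk2 G ℓ r i j‖^2
        ≤ ∑ _r : Fin M, ∑ _ℓ : Fin M, ((d:ℝ) * ((d:ℝ) * μ)^2) := by
          refine Finset.sum_le_sum fun r _ => Finset.sum_le_sum fun ℓ _ => ?_
          calc ∑ j : Fin d, ∑ i : Fin d, ‖blk2 G ℓ r i j‖^2
              ≤ (Fintype.card (Fin d)) * rho (blk2 G ℓ r) ^ 2 := frob_le _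
            _ ≤ (d:ℝ) * ((d:ℝ) * μ)^2 := by
                rw [Fintype.card_fin]
                have h1 : 0 ≤ rho (blk2 G ℓ r) := norm_nonneg _
                have h3 : rho (blk2 G ℓ r) ^ 2 ≤ ((d:ℝ) * μ)^2 :=
                  pow_le_pow_left₀ h1 (hle ℓ r) 2
                exact mul_le_mul_of_nonneg_left h3 hd'.le
      _ = (M:ℝ)^2 * ((d:ℝ)^3 * μ^2) := by
          simp [Finset.sum_const, Finset.card_univ]
          ring
  have hsq : 1 / ((M:ℝ) * (d:ℝ)^2) ≤ μ^2 := by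
    rw [div_le_iff₀ (by positivity)]
    have hMd : (0:ℝ) < (M:ℝ) * d := by positivity
    nlinarith
  calc (1:ℝ) / Real.sqrt ((d:ℝ) * (M * d))
      = Real.sqrt (1 / ((M:ℝ) * (d:ℝ)^2)) := by
        rw [one_div, one_div, Real.sqrt_inv]
        congr 2
        ring
    _ ≤ Real.sqrt (μ^2) := Real.sqrt_le_sqrt hsq
    _ = μ := Real.sqrt_sq hμ0
end

section
/- Let F be the M×M DFT matrix with entries F_{ℓ,r} = (1/√M) exp(2πi ℓ r / M), let U be an arbitrary d×d unitary matrix, and set Φ = I_N (N = Md) and Ψ = F ⊗ U. Then Φ and Ψ are unitary and their block-coherence equals the minimal possible value: μ_B(Φ,Ψ) = 1/√(dN). -/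
open Matrix

noncomputable def dftMatrix (M : ℕ) : Matrix (Fin M) (Fin M) ℂ :=
  Matrix.of fun ℓ r =>
    ((1 / Real.sqrt M : ℝ) : ℂ) *
      Complex.exp (2 * Real.pi * Complex.I * (ℓ.val : ℂ) * (r.val : ℂ) / (M : ℂ))


open scoped Matrix.Norms.L2Operator in
lemma rho_eq_l2norm {m n : Type*} [Fintype m] [Fintype n] [DecidableEq n]
    (A : Matrix m n ℂ) :
    ‖LinearMap.toContinuousLinearMap (Matrix.toEuclideanLin A)‖ = ‖A‖ := rfl

open scoped Matrix.Norms.L2Operator in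
lemma l2norm_unitary {d : ℕ} (hd : 0 < d) (U : Matrix (Fin d) (Fin d) ℂ)
    (hU : U ∈ Matrix.unitaryGroup (Fin d) ℂ) : ‖U‖ = 1 := by
  haveI : NeZero d := ⟨hd.ne'⟩
  exact CStarRing.norm_of_mem_unitary hU

lemma kron_mem_unitary {M d : ℕ} (A : Matrix (Fin M) (Fin M) ℂ)
    (B : Matrix (Fin d) (Fin d) ℂ) (hA : A ∈ Matrix.unitaryGroup (Fin M) ℂ)
    (hB : B ∈ Matrix.unitaryGroup (Fin d) ℂ) :
    Matrix.kroneckerMap (· * ·) A B ∈ Matrix.unitaryGroup (Fin M × Fin d) ℂ := by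
  have hstar : star (Matrix.kroneckerMap (· * ·) A B)
      = Matrix.kroneckerMap (· * ·) (star A) (star B) := by
    ext ⟨i, j⟩ ⟨k, l⟩
    simp [Matrix.star_apply, Matrix.kroneckerMap_apply, mul_comm]
  rw [Matrix.mem_unitaryGroup_iff']
  rw [hstar]
  have := Matrix.mul_kronecker_mul (star A) A (star B) B
  simp only [Matrix.kronecker] at this
  rw [← this]
  rw [(Matrix.mem_unitaryGroup_iff'.mp hA : star A * A = 1),
    (Matrix.mem_unitaryGroup_iff'.mp hB : star B * B = 1)]
  exact Matrix.one_kronecker_one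

lemma zeta_sum_eq_zero (M : ℕ) (hM : 0 < M) (ℓ r : Fin M) (h : ℓ ≠ r) :
    ∑ k ∈ Finset.range M,
      Complex.exp (2 * Real.pi * Complex.I * ((r.val : ℂ) - (ℓ.val : ℂ)) / M) ^ k = 0 := by
  set z : ℂ := 2 * Real.pi * Complex.I * ((r.val : ℂ) - (ℓ.val : ℂ)) / M with hz
  have hM0 : (M : ℂ) ≠ 0 := Nat.cast_ne_zero.mpr hM.ne'
  set nz : ℤ := (r.val : ℤ) - (ℓ.val : ℤ) with hnz
  have hζM : Complex.exp z ^ M = 1 := by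
    rw [← Complex.exp_nat_mul]
    have h2 : (M : ℂ) * z = (nz : ℂ) * (2 * Real.pi * Complex.I) := by
      rw [hz, hnz]; push_cast; field_simp
    rw [h2, Complex.exp_int_mul_two_pi_mul_I]
  have hζ1 : Complex.exp z ≠ 1 := by
    intro hone
    rw [Complex.exp_eq_one_iff] at hone
    obtain ⟨n, hn⟩ := hone
    have hpi : (Real.pi : ℂ) ≠ 0 := Complex.ofReal_ne_zero.mpr Real.pi_ne_zero
    have h2πI : (2 * (Real.pi : ℂ) * Complex.I) ≠ 0 := by
      simp [Complex.ofReal_ne_zero, Real.pi_ne_zero, Complex.I_ne_zero]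
    rw [hz, div_eq_iff hM0] at hn
    have hcast : nz = n * M := by
      have hC : ((r.val : ℂ) - (ℓ.val : ℂ)) = (n : ℂ) * M := by
        apply mul_left_cancel₀ h2πI
        linear_combination hn
      rw [hnz]; exact_mod_cast hC
    have hdvd : (M : ℤ) ∣ ((r.val : ℤ) - (ℓ.val : ℤ)) := ⟨n, by linarith [hcast]⟩
    have habs : |((r.val : ℤ) - (ℓ.val : ℤ))| < M := by
      have h1 : (r.val : ℤ) < M := by exact_mod_cast r.2
      have h2 : (ℓ.val : ℤ) < M := by exact_mod_cast ℓ.2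
      have h3 : (0:ℤ) ≤ r.val := by positivity
      have h4 : (0:ℤ) ≤ ℓ.val := by positivity
      rw [abs_lt]; omega
    have := Int.eq_zero_of_abs_lt_dvd hdvd habs
    have : r.val = ℓ.val := by omega
    exact h (Fin.ext this.symm)
  rw [geom_sum_eq hζ1, hζM, sub_self, zero_div]

lemma dft_term (M : ℕ) (hM : 0 < M) (ℓ r k : Fin M) :
    (starRingEnd ℂ) (dftMatrix M k ℓ) * dftMatrix M k r
      = ((M : ℂ))⁻¹ *
        Complex.exp (2 * Real.pi * Complex.I * ((r.val : ℂ) - (ℓ.val : ℂ)) / M) ^ (k : ℕ) := by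
  have hM0 : (M : ℂ) ≠ 0 := Nat.cast_ne_zero.mpr hM.ne'
  simp only [dftMatrix, Matrix.of_apply, _root_.map_mul, Complex.conj_ofReal,
    ← Complex.exp_conj, ← Complex.exp_nat_mul]
  rw [mul_mul_mul_comm, ← Complex.exp_add]
  congr 1
  · rw [← Complex.ofReal_mul]
    rw [div_mul_div_comm, one_mul, Real.mul_self_sqrt (by positivity : (0:ℝ) ≤ (M:ℝ))]
    push_cast; ring
  · simp only [map_div₀, _root_.map_mul, Complex.conj_I, Complex.conj_ofReal, map_ofNat,
      map_natCast]
    congr 1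
    field_simp
    ring

lemma dft_mem_unitary (M : ℕ) (hM : 0 < M) :
    dftMatrix M ∈ Matrix.unitaryGroup (Fin M) ℂ := by
  rw [Matrix.mem_unitaryGroup_iff']
  ext ℓ r
  rw [Matrix.mul_apply]
  simp only [Matrix.star_apply, Complex.star_def, dft_term M hM]
  rw [← Finset.mul_sum]
  rw [Fin.sum_univ_eq_sum_range
    (fun k => Complex.exp (2 * Real.pi * Complex.I * ((r.val : ℂ) - (ℓ.val : ℂ)) / M) ^ k) M]
  have hM0 : (M : ℂ) ≠ 0 := Nat.cast_ne_zero.mpr hM.ne'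
  by_cases h : ℓ = r
  · subst h
    simp [Matrix.one_apply_eq, hM0]
  · rw [zeta_sum_eq_zero M hM ℓ r h, mul_zero, Matrix.one_apply_ne h]

lemma blk_one_mul {M d : ℕ} (U : Matrix (Fin d) (Fin d) ℂ) (ℓ r : Fin M) :
    (blk (1 : Matrix (Fin M × Fin d) (Fin M × Fin d) ℂ) ℓ)ᴴ *
      blk (Matrix.kroneckerMap (· * ·) (dftMatrix M) U) r
      = dftMatrix M ℓ r • U := by
  ext a b
  rw [Matrix.mul_apply]
  simp only [blk, Matrix.conjTranspose_apply, Matrix.one_apply, Fintype.sum_prod_type,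
    Matrix.of_apply, Matrix.kroneckerMap_apply, apply_ite, Prod.ext_iff, _root_.map_one, _root_.map_zero,
    ite_mul, one_mul, zero_mul, ite_and]
  rw [Finset.sum_eq_single ℓ]
  · rw [Finset.sum_eq_single a] <;> simp +contextual
  · intro x _ hx; simp [hx]
  · simp

lemma dft_entry_norm (M : ℕ) (ℓ r : Fin M) :
    ‖dftMatrix M ℓ r‖ = 1 / Real.sqrt M := by
  have harg : 2 * (Real.pi:ℂ) * Complex.I * (ℓ.val : ℂ) * (r.val : ℂ) / (M : ℂ)
      = ((2 * Real.pi * ℓ.val * r.val / M : ℝ) : ℂ) * Complex.I := by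
    push_cast; ring
  rw [dftMatrix, Matrix.of_apply, norm_mul, harg,
    Complex.norm_exp_ofReal_mul_I, mul_one, Complex.norm_real, Real.norm_eq_abs,
    abs_of_nonneg (by positivity)]

open scoped Matrix.Norms.L2Operator in
theorem dft_kron_unitary_achieves_min_block_coherence (M d : ℕ) (hM : 0 < M) (hd : 0 < d)
    (U : Matrix (Fin d) (Fin d) ℂ) (hU : U ∈ Matrix.unitaryGroup (Fin d) ℂ) :
    (1 : Matrix (Fin M × Fin d) (Fin M × Fin d) ℂ) ∈ Matrix.unitaryGroup (Fin M × Fin d) ℂ ∧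
    Matrix.kroneckerMap (· * ·) (dftMatrix M) U ∈ Matrix.unitaryGroup (Fin M × Fin d) ℂ ∧
    muB2 (1 : Matrix (Fin M × Fin d) (Fin M × Fin d) ℂ)
        (Matrix.kroneckerMap (· * ·) (dftMatrix M) U)
      = 1 / Real.sqrt ((d : ℝ) * (M * d)) := by
  refine ⟨one_mem _, kron_mem_unitary _ _ (dft_mem_unitary M hM) hU, ?_⟩
  haveI : Nonempty (Fin M) := ⟨⟨0, hM⟩⟩
  have hrho : ∀ p : Fin M × Fin M,
      (1 / (d : ℝ)) * rho ((blk (1 : Matrix (Fin M × Fin d) (Fin M × Fin d) ℂ) p.1)ᴴ *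
        blk (Matrix.kroneckerMap (· * ·) (dftMatrix M) U) p.2)
      = 1 / ((d : ℝ) * Real.sqrt M) := by
    intro p
    rw [blk_one_mul U p.1 p.2]
    have h1 : rho (dftMatrix M p.1 p.2 • U) = ‖dftMatrix M p.1 p.2 • U‖ := rfl
    rw [h1, norm_smul, l2norm_unitary hd U hU, mul_one, dft_entry_norm]
    rw [div_mul_div_comm, one_mul]
  unfold muB2
  rw [iSup_congr hrho, ciSup_const]
  rw [show ((d : ℝ) * (M * d)) = (d : ℝ) ^ 2 * M by ring,
    Real.sqrt_mul (by positivity) (M : ℝ), Real.sqrt_sq (by positivity)]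
end

section
/- (Block uncertainty relation) Let Φ, Ψ be N×N unitary matrices partitioned into M = N/d blocks of d columns, and let x ∈ ℂ^N be nonzero with x = Σ_ℓ Φ[ℓ]a[ℓ] = Σ_ℓ Ψ[ℓ]b[ℓ]. Let A = ‖a‖_{2,0} and B = ‖b‖_{2,0} be the number of nonzero blocks of a and b respectively. Then √(AB) ≥ 1/(d·μ_B(Φ,Ψ)), and consequently (A+B)/2 ≥ 1/(d·μ_B(Φ,Ψ)). -/
open Matrix

/-- number of nonzero length-`d` blocks of a vector -/
noncomputable def blockNnz {M d : ℕ} (x : Fin M × Fin d → ℂ) : ℕ :=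
  {ℓ : Fin M | ∃ j, x (ℓ, j) ≠ 0}.ncard

lemma enorm_eq_norm {n : Type*} [Fintype n] (v : n → ℂ) :
    _root_.enorm v = ‖(WithLp.equiv 2 (n → ℂ)).symm v‖ := by
  rw [EuclideanSpace.norm_eq]; rfl

lemma enorm_nonneg' {n : Type*} [Fintype n] (v : n → ℂ) : 0 ≤ _root_.enorm v := Real.sqrt_nonneg _

lemma rho_nonneg {m n : Type*} [Fintype m] [Fintype n] [DecidableEq n]
    (A : Matrix m n ℂ) : 0 ≤ rho A := norm_nonneg _

lemma enorm_mulVec_le {m n : Type*} [Fintype m] [Fintype n] [DecidableEq n]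
    (A : Matrix m n ℂ) (v : n → ℂ) :
    _root_.enorm (A.mulVec v) ≤ rho A * _root_.enorm v := by
  rw [enorm_eq_norm, enorm_eq_norm]
  exact (LinearMap.toContinuousLinearMap (Matrix.toEuclideanLin A)).le_opNorm ((WithLp.equiv 2 (n → ℂ)).symm v)

lemma enorm_sum_le_blk {n ι : Type*} [Fintype n] (s : Finset ι) (f : ι → n → ℂ) :
    _root_.enorm (∑ i ∈ s, f i) ≤ ∑ i ∈ s, _root_.enorm (f i) := by
  simp only [enorm_eq_norm]
  rw [show (WithLp.equiv 2 (n → ℂ)).symm (∑ i ∈ s, f i)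
      = ∑ i ∈ s, (WithLp.equiv 2 (n → ℂ)).symm (f i) from
    map_sum (WithLp.linearEquiv 2 ℂ (n → ℂ)).symm f s]
  exact norm_sum_le _ _

lemma dot_self' {n : Type*} [Fintype n] (v : n → ℂ) :
    ((∑ i, ‖v i‖ ^ 2 : ℝ) : ℂ) = star v ⬝ᵥ v := by
  simp [dotProduct, RCLike.conj_mul, Pi.star_apply]

lemma sumsq_unitary {n : Type*} [Fintype n] [DecidableEq n] (U : Matrix n n ℂ)
    (hU : U ∈ Matrix.unitaryGroup n ℂ) (v : n → ℂ) :
    (∑ i, ‖(U.mulVec v) i‖ ^ 2) = (∑ i, ‖v i‖ ^ 2) := by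
  have h : star (U.mulVec v) ⬝ᵥ (U.mulVec v) = star v ⬝ᵥ v := by
    rw [Matrix.star_mulVec, Matrix.dotProduct_mulVec, Matrix.vecMul_vecMul,
      ← Matrix.star_eq_conjTranspose, hU.1, Matrix.vecMul_one]
  have := (dot_self' (U.mulVec v)).trans (h.trans (dot_self' v).symm)
  exact_mod_cast this

lemma blockRow {ι κ d e : Type*} [Fintype κ] [Fintype d] [Fintype e]
    (C : Matrix (ι × d) (κ × e) ℂ) (v : κ × e → ℂ) (ℓ : ι) :
    (fun i => C.mulVec v (ℓ, i)) = ∑ r : κ, (blk2 C ℓ r).mulVec (fun j => v (r, j)) := by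
  funext i
  simp [Matrix.mulVec, dotProduct, blk2, Fintype.sum_prod_type, Finset.sum_apply]

lemma blk2_mul {M d : ℕ} (Φ Ψ : Matrix (Fin M × Fin d) (Fin M × Fin d) ℂ) (ℓ r : Fin M) :
    blk2 (Φᴴ * Ψ) ℓ r = (blk Φ ℓ)ᴴ * blk Ψ r := by
  ext i j
  simp [blk2, blk, Matrix.mul_apply, Matrix.conjTranspose_apply, Fintype.sum_prod_type]

set_option maxHeartbeats 1000000 in
theorem block_uncertainty_relation (M d : ℕ) (hM : 0 < M) (hd : 0 < d)
    (Φ Ψ : Matrix (Fin M × Fin d) (Fin M × Fin d) ℂ)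
    (hΦ : Φ ∈ Matrix.unitaryGroup (Fin M × Fin d) ℂ)
    (hΨ : Ψ ∈ Matrix.unitaryGroup (Fin M × Fin d) ℂ)
    (x a b : Fin M × Fin d → ℂ) (hx : x ≠ 0)
    (ha : x = Φ.mulVec a) (hb : x = Ψ.mulVec b) :
    Real.sqrt ((blockNnz a : ℝ) * (blockNnz b : ℝ)) ≥ 1 / ((d : ℝ) * muB2 Φ Ψ) ∧
    ((blockNnz a : ℝ) + (blockNnz b : ℝ)) / 2 ≥ 1 / ((d : ℝ) * muB2 Φ Ψ) := by
  classical
  obtain ⟨μ, hμdef⟩ : ∃ y, y = muB2 Φ Ψ := ⟨_, rfl⟩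
  obtain ⟨D, hD⟩ : ∃ y, y = (d : ℝ) := ⟨_, rfl⟩
  rw [← hμdef, ← hD]
  have hDpos : (0:ℝ) < D := by rw [hD]; exact_mod_cast hd
  -- a = (Φᴴ * Ψ).mulVec b
  have hab : a = (Φᴴ * Ψ).mulVec b := by
    have h1 : Φᴴ.mulVec x = a := by
      rw [ha, Matrix.mulVec_mulVec, ← Matrix.star_eq_conjTranspose, hΦ.1, Matrix.one_mulVec]
    rw [← h1, hb, Matrix.mulVec_mulVec]
  -- block norms
  obtain ⟨na, hna⟩ : ∃ y, y = fun ℓ : Fin M => _root_.enorm (fun j => a (ℓ, j)) := ⟨_, rfl⟩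
  obtain ⟨nb, hnb⟩ : ∃ y, y = fun r : Fin M => _root_.enorm (fun j => b (r, j)) := ⟨_, rfl⟩
  obtain ⟨Sa, hSa⟩ : ∃ y, y = Finset.univ.filter (fun ℓ : Fin M => ∃ j, a (ℓ, j) ≠ 0) := ⟨_, rfl⟩
  obtain ⟨Sb, hSb⟩ : ∃ y, y = Finset.univ.filter (fun r : Fin M => ∃ j, b (r, j) ≠ 0) := ⟨_, rfl⟩
  have hAcard : (blockNnz a : ℝ) = (Sa.card : ℝ) := by
    rw [blockNnz, Set.ncard_eq_toFinset_card']
    congr 2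
    simp [hSa, Set.toFinset_setOf]
  have hBcard : (blockNnz b : ℝ) = (Sb.card : ℝ) := by
    rw [blockNnz, Set.ncard_eq_toFinset_card']
    congr 2
    simp [hSb, Set.toFinset_setOf]
  have hnann : ∀ ℓ, 0 ≤ na ℓ := by
    intro ℓ; rw [hna]; exact enorm_nonneg' _
  have hnbnn : ∀ r, 0 ≤ nb r := by
    intro r; rw [hnb]; exact enorm_nonneg' _
  have hna0 : ∀ ℓ ∉ Sa, na ℓ = 0 := by
    intro ℓ hℓ
    simp only [hSa, Finset.mem_filter, Finset.mem_univ, true_and, not_exists, not_not] at hℓ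
    simp [hna, _root_.enorm, hℓ]
  have hnb0 : ∀ r ∉ Sb, nb r = 0 := by
    intro r hr
    simp only [hSb, Finset.mem_filter, Finset.mem_univ, true_and, not_exists, not_not] at hr
    simp [hnb, _root_.enorm, hr]
  -- mu bound and nonneg
  have hbdd : BddAbove (Set.range fun p : Fin M × Fin M =>
      (1 / (d : ℝ)) * rho ((blk Φ p.1)ᴴ * blk Ψ p.2)) :=
    (Set.finite_range _).bddAbove
  have hμnn : 0 ≤ μ := by
    rw [hμdef]
    refine le_trans ?_ (le_ciSup hbdd (⟨0, hM⟩, ⟨0, hM⟩))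
    show (0:ℝ) ≤ (1 / (d : ℝ)) * rho ((blk Φ ⟨0, hM⟩)ᴴ * blk Ψ ⟨0, hM⟩)
    exact mul_nonneg (one_div_nonneg.mpr (Nat.cast_nonneg d)) (rho_nonneg _)
  have hρle : ∀ ℓ r : Fin M, rho ((blk Φ ℓ)ᴴ * blk Ψ r) ≤ D * μ := by
    intro ℓ r
    have h1 : (1 / D) * rho ((blk Φ ℓ)ᴴ * blk Ψ r) ≤ μ := by
      rw [hD, hμdef]; exact le_ciSup hbdd (ℓ, r)
    calc rho ((blk Φ ℓ)ᴴ * blk Ψ r) = D * ((1 / D) * rho ((blk Φ ℓ)ᴴ * blk Ψ r)) := by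
          rw [← mul_assoc, mul_one_div, div_self hDpos.ne', one_mul]
      _ ≤ D * μ := by exact mul_le_mul_of_nonneg_left h1 hDpos.le
  -- total norms
  obtain ⟨Nb, hNb⟩ : ∃ y, y = Real.sqrt (∑ i, ‖b i‖ ^ 2) := ⟨_, rfl⟩
  obtain ⟨Na, hNa⟩ : ∃ y, y = Real.sqrt (∑ i, ‖a i‖ ^ 2) := ⟨_, rfl⟩
  have hNbnn : 0 ≤ Nb := by rw [hNb]; exact Real.sqrt_nonneg _
  have hsumb : ∑ r, (nb r) ^ 2 = ∑ i, ‖b i‖ ^ 2 := by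
    rw [Fintype.sum_prod_type]
    refine Finset.sum_congr rfl fun r _ => ?_
    simp only [hnb, _root_.enorm]
    exact Real.sq_sqrt (Finset.sum_nonneg fun j _ => sq_nonneg _)
  have hsuma : ∑ ℓ, (na ℓ) ^ 2 = ∑ i, ‖a i‖ ^ 2 := by
    rw [Fintype.sum_prod_type]
    refine Finset.sum_congr rfl fun r _ => ?_
    simp only [hna, _root_.enorm]
    exact Real.sq_sqrt (Finset.sum_nonneg fun j _ => sq_nonneg _)
  -- Step: na ℓ ≤ D μ √B Nb
  obtain ⟨K, hK⟩ : ∃ y, y = D * μ * (Real.sqrt (Sb.card) * Nb) := ⟨_, rfl⟩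
  have hKnn : 0 ≤ K := by
    rw [hK]
    exact mul_nonneg (mul_nonneg hDpos.le hμnn) (mul_nonneg (Real.sqrt_nonneg _) hNbnn)
  have hstep : ∀ ℓ : Fin M, na ℓ ≤ K := by
    intro ℓ
    have h1 : na ℓ ≤ ∑ r : Fin M, rho ((blk Φ ℓ)ᴴ * blk Ψ r) * nb r := by
      simp only [hna]
      calc _root_.enorm (fun j => a (ℓ, j))
          = _root_.enorm (∑ r : Fin M, (blk2 (Φᴴ * Ψ) ℓ r).mulVec (fun j => b (r, j))) := by
            rw [← blockRow]; congr 1; funext i; rw [hab]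
        _ ≤ ∑ r : Fin M, _root_.enorm ((blk2 (Φᴴ * Ψ) ℓ r).mulVec (fun j => b (r, j))) :=
            enorm_sum_le_blk _ _
        _ ≤ ∑ r : Fin M, rho ((blk Φ ℓ)ᴴ * blk Ψ r) * nb r := by
            refine Finset.sum_le_sum fun r _ => ?_
            simp only [hnb]
            rw [blk2_mul Φ Ψ ℓ r]
            exact enorm_mulVec_le _ _
    have h2 : ∑ r : Fin M, rho ((blk Φ ℓ)ᴴ * blk Ψ r) * nb r
        = ∑ r ∈ Sb, rho ((blk Φ ℓ)ᴴ * blk Ψ r) * nb r := by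
      refine (Finset.sum_subset (Finset.subset_univ Sb) fun r _ hr => ?_).symm
      rw [hnb0 r hr, mul_zero]
    have h3 : ∑ r ∈ Sb, rho ((blk Φ ℓ)ᴴ * blk Ψ r) * nb r ≤ (D * μ) * ∑ r ∈ Sb, nb r := by
      rw [Finset.mul_sum]
      exact Finset.sum_le_sum fun r _ => mul_le_mul_of_nonneg_right (hρle ℓ r) (hnbnn r)
    have h4 : ∑ r ∈ Sb, nb r ≤ Real.sqrt (Sb.card) * Nb := by
      have hcs : (∑ r ∈ Sb, nb r) ^ 2 ≤ (Sb.card : ℝ) * ∑ r ∈ Sb, (nb r) ^ 2 := by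
        exact sq_sum_le_card_mul_sum_sq
      have h5 : ∑ r ∈ Sb, (nb r) ^ 2 ≤ ∑ r, (nb r) ^ 2 :=
        Finset.sum_le_sum_of_subset_of_nonneg (Finset.subset_univ _)
          (fun r _ _ => sq_nonneg _)
      have h6 : (∑ r ∈ Sb, nb r) ^ 2 ≤ (Sb.card : ℝ) * (Nb ^ 2) := by
        rw [hNb, Real.sq_sqrt (Finset.sum_nonneg fun i _ => sq_nonneg _), ← hsumb]
        exact hcs.trans (by gcongr)
      calc ∑ r ∈ Sb, nb r = Real.sqrt ((∑ r ∈ Sb, nb r) ^ 2) :=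
            (Real.sqrt_sq (Finset.sum_nonneg fun r _ => hnbnn r)).symm
        _ ≤ Real.sqrt ((Sb.card : ℝ) * Nb ^ 2) := Real.sqrt_le_sqrt h6
        _ = Real.sqrt (Sb.card) * Nb := by
            rw [Real.sqrt_mul (Nat.cast_nonneg _), Real.sqrt_sq hNbnn]
    calc na ℓ ≤ (D * μ) * ∑ r ∈ Sb, nb r := h1.trans (h2 ▸ h3)
      _ ≤ (D * μ) * (Real.sqrt (Sb.card) * Nb) := by
          exact mul_le_mul_of_nonneg_left h4 (mul_nonneg hDpos.le hμnn)
      _ = K := by rw [hK]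
  -- Na ≤ √A * K
  have hNaK : Na ≤ Real.sqrt (Sa.card) * K := by
    have h1 : Na ^ 2 ≤ (Sa.card : ℝ) * K ^ 2 := by
      rw [hNa, Real.sq_sqrt (Finset.sum_nonneg fun i _ => sq_nonneg _), ← hsuma]
      have h2 : ∑ ℓ, (na ℓ) ^ 2 = ∑ ℓ ∈ Sa, (na ℓ) ^ 2 := by
        refine (Finset.sum_subset (Finset.subset_univ Sa) fun ℓ _ hℓ => ?_).symm
        rw [hna0 ℓ hℓ]; ring
      rw [h2]
      calc ∑ ℓ ∈ Sa, (na ℓ) ^ 2 ≤ ∑ ℓ ∈ Sa, K ^ 2 :=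
            Finset.sum_le_sum fun ℓ _ => pow_le_pow_left₀ (hnann ℓ) (hstep ℓ) 2
        _ = (Sa.card : ℝ) * K ^ 2 := by rw [Finset.sum_const, nsmul_eq_mul]
    have hNann : 0 ≤ Na := by rw [hNa]; exact Real.sqrt_nonneg _
    calc Na = Real.sqrt (Na ^ 2) := (Real.sqrt_sq hNann).symm
      _ ≤ Real.sqrt ((Sa.card : ℝ) * K ^ 2) := Real.sqrt_le_sqrt h1
      _ = Real.sqrt (Sa.card) * K := by
          rw [Real.sqrt_mul (Nat.cast_nonneg _), Real.sqrt_sq hKnn]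
  -- Na = Nb = Nx > 0
  have hNaNb : Na = Nb := by
    rw [hNa, hNb, ← sumsq_unitary Φ hΦ a, ← sumsq_unitary Ψ hΨ b, ← ha, ← hb]
  have hNbpos : 0 < Nb := by
    rcases Function.ne_iff.mp hx with ⟨i, hi⟩
    rw [hNb, ← sumsq_unitary Ψ hΨ b, ← hb]
    have : 0 < ∑ i, ‖x i‖ ^ 2 := by
      refine Finset.sum_pos' (fun j _ => sq_nonneg _) ⟨i, Finset.mem_univ i, ?_⟩
      exact pow_pos (norm_pos_iff.mpr hi) 2
    exact Real.sqrt_pos.mpr this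
  -- key : 1 ≤ D μ √(A B)
  have hkey : 1 ≤ D * μ * Real.sqrt ((Sa.card : ℝ) * (Sb.card : ℝ)) := by
    have h1 : Nb ≤ D * μ * Real.sqrt ((Sa.card : ℝ) * (Sb.card : ℝ)) * Nb := by
      calc Nb = Na := hNaNb.symm
        _ ≤ Real.sqrt (Sa.card) * K := hNaK
        _ = D * μ * Real.sqrt ((Sa.card : ℝ) * (Sb.card : ℝ)) * Nb := by
            rw [hK, Real.sqrt_mul (Nat.cast_nonneg _)]; ring
    exact (le_mul_iff_one_le_left hNbpos).mp (by linarith [h1])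
  have hDμpos : 0 < D * μ := by
    rcases lt_or_ge 0 (D * μ) with h | h
    · exact h
    · exfalso
      have h2 : D * μ * Real.sqrt ((Sa.card : ℝ) * (Sb.card : ℝ)) ≤ 0 :=
        mul_nonpos_of_nonpos_of_nonneg h (Real.sqrt_nonneg _)
      linarith
  have hfirst : Real.sqrt ((blockNnz a : ℝ) * (blockNnz b : ℝ)) ≥ 1 / (D * μ) := by
    rw [hAcard, hBcard, ge_iff_le, div_le_iff₀ hDμpos]
    nlinarith [hkey]
  refine ⟨hfirst, ?_⟩
  have hAM : Real.sqrt ((blockNnz a : ℝ) * (blockNnz b : ℝ))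
      ≤ ((blockNnz a : ℝ) + (blockNnz b : ℝ)) / 2 := by
    set A' := (blockNnz a : ℝ)
    set B' := (blockNnz b : ℝ)
    have hA'nn : 0 ≤ A' := Nat.cast_nonneg _
    have hB'nn : 0 ≤ B' := Nat.cast_nonneg _
    calc Real.sqrt (A' * B') ≤ Real.sqrt (((A' + B') / 2) ^ 2) :=
          Real.sqrt_le_sqrt (by nlinarith [sq_nonneg (A' - B')])
      _ = (A' + B') / 2 := Real.sqrt_sq (div_nonneg (add_nonneg hA'nn hB'nn) (by norm_num))
  exact le_trans hfirst hAM
end
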